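/- Let T be a simplicial tree and let ∼ be an equivalence relation on the edge set of T such that any two edges lying on a common path between two ∼-equivalent edges are also ∼-equivalent to them (i.e., each equivalence class spans a subtree, its cylinder). Define the tree of cylinders T_c as the bipartite graph with vertex set V ⊔ W, where V is the set of cylinders and W is the set of vertices of T belonging to at least two distinct cylinders, with v ∈ V adjacent to w ∈ W iff w ∈ v. Then T_c is a tree. -/

import Mathlib

open SimpleGraph

variable {V : Type*}

/-- The cylinder of an edge `e`: the set of vertices spanned by the edges equivalent to `e`. -/
def Cyl (T : SimpleGraph V) (r : Sym2 V → Sym2 V → Prop) (e : Sym2 V) : Set V :=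
  {w : V | ∃ e' ∈ T.edgeSet, r e e' ∧ w ∈ e'}

/-- The set of cylinders of `(T, r)`. -/
def Cylinders (T : SimpleGraph V) (r : Sym2 V → Sym2 V → Prop) : Set (Set V) :=
  {S : Set V | ∃ e ∈ T.edgeSet, S = Cyl T r e}

/-- The set of vertices of `T` belonging to at least two distinct cylinders. -/
def SharedVertices (T : SimpleGraph V) (r : Sym2 V → Sym2 V → Prop) : Set V :=
  {w : V | ∃ S₁ ∈ Cylinders T r, ∃ S₂ ∈ Cylinders T r, S₁ ≠ S₂ ∧ w ∈ S₁ ∧ w ∈ S₂}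

/-- The tree of cylinders: the bipartite graph on cylinders and shared vertices, with a
cylinder adjacent to a vertex iff the vertex belongs to the cylinder. -/
def treeOfCylinders (T : SimpleGraph V) (r : Sym2 V → Sym2 V → Prop) :
    SimpleGraph (↥(Cylinders T r) ⊕ ↥(SharedVertices T r)) :=
  SimpleGraph.fromRel (fun a b =>
    ∃ (S : ↥(Cylinders T r)) (w : ↥(SharedVertices T r)),
      a = Sum.inl S ∧ b = Sum.inr w ∧ (w : V) ∈ (S : Set V))

section Aux

lemma edge_head' {G : SimpleGraph V} {a b x : V} (p : G.Walk a b) (hp : p.IsPath)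
    (hx : s(a,x) ∈ p.edges) : p.edges.head? = some s(a,x) := by
  cases p with
  | nil => simp at hx
  | cons h' p' =>
    rw [Walk.edges_cons] at hx ⊢
    rcases List.mem_cons.mp hx with h1 | h2
    · rw [h1]; rfl
    · have : a ∈ p'.support := Walk.fst_mem_support_of_mem_edges p' h2
      rw [Walk.cons_isPath_iff] at hp
      exact absurd this hp.2

variable [DecidableEq V]

lemma chain'_isPath {G : SimpleGraph V} (hG : G.IsAcyclic) {u v : V} (p : G.Walk u v)
    (hc : p.edges.Chain' (· ≠ ·)) : p.IsPath := by
  induction p with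
  | nil => exact Walk.IsPath.nil
  | @cons u c v h' p' ih =>
    rw [Walk.edges_cons] at hc
    have hp' : p'.IsPath := ih hc.tail
    rw [Walk.cons_isPath_iff]
    refine ⟨hp', fun hu => ?_⟩
    have hq1 : (p'.takeUntil u hu).IsPath := hp'.takeUntil hu
    have hne : s(u, c) ∉ (p'.takeUntil u hu).edges := by
      intro he
      have hhd : (p'.takeUntil u hu).edges.head? = some s(c,u) :=
        edge_head' _ hq1 (by rwa [Sym2.eq_swap] at he)
      have hph : p'.edges.head? = some s(c,u) := by
        conv_lhs => rw [← Walk.take_spec p' hu]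
        rw [Walk.edges_append, List.head?_append, hhd]
        rfl
      have := (List.isChain_cons.mp hc).1 s(c,u) hph
      exact this (Sym2.eq_swap ..)
    exact hG (Walk.cons h' (p'.takeUntil u hu))
      ((Walk.cons_isCycle_iff _ _).mpr ⟨hq1, hne⟩)

lemma head_eq_of_adj_mem {T : SimpleGraph V} (hT : T.IsTree) {u v x : V} (p : T.Walk u v)
    (hp : p.IsPath) (h : T.Adj u x) (hx : x ∈ p.support) :
    p.edges.head? = some s(u,x) := by
  have hq1 : (p.takeUntil x hx).IsPath := hp.takeUntil hx
  have huniq := hT.existsUnique_path u x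
  have h1 : p.takeUntil x hx = Walk.cons h Walk.nil :=
    huniq.unique (y₂ := Walk.cons h Walk.nil) hq1 (by
      rw [Walk.cons_isPath_iff]
      exact ⟨Walk.IsPath.nil, by simp [h.ne]⟩)
  conv_lhs => rw [← Walk.take_spec p hx]
  rw [Walk.edges_append, h1]
  rfl

lemma last_eq_of_adj_mem {T : SimpleGraph V} (hT : T.IsTree) {u v x : V} (p : T.Walk u v)
    (hp : p.IsPath) (h : T.Adj v x) (hx : x ∈ p.support) :
    p.edges.getLast? = some s(v,x) := by
  have := head_eq_of_adj_mem hT p.reverse (hp.reverse) h (by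
    rw [Walk.support_reverse, List.mem_reverse]; exact hx)
  rwa [Walk.edges_reverse, List.head?_reverse] at this

lemma isPath_concat {T : SimpleGraph V} {u v x : V} {p : T.Walk u v} (hp : p.IsPath)
    (h : T.Adj v x) (hx : x ∉ p.support) : (p.concat h).IsPath := by
  rw [← Walk.isPath_reverse_iff, Walk.reverse_concat, Walk.cons_isPath_iff]
  exact ⟨hp.reverse, by rwa [Walk.support_reverse, List.mem_reverse]⟩

variable {T : SimpleGraph V} {r : Sym2 V → Sym2 V → Prop}

lemma cyl_mem {e : Sym2 V} (he : e ∈ T.edgeSet) : Cyl T r e ∈ Cylinders T r := ⟨e, he, rfl⟩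

variable (hT : T.IsTree)
  (hrefl : ∀ e ∈ T.edgeSet, r e e)
  (hsymm : ∀ e e' : Sym2 V, r e e' → r e' e)
  (htrans : ∀ e e' e'' : Sym2 V, r e e' → r e' e'' → r e e'')
  (hconn : ∀ (u v : V) (p : T.Walk u v), p.IsPath →
      ∀ e₁ e₂ : Sym2 V, p.edges.head? = some e₁ → p.edges.getLast? = some e₂ →
        r e₁ e₂ → ∀ e ∈ p.edges, r e e₁)

include hT hsymm htrans hconn in
lemma cyl_convex {e : Sym2 V} {u v : V}
    (hu : u ∈ Cyl T r e) (hv : v ∈ Cyl T r e) (p : T.Walk u v) (hp : p.IsPath) :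
    ∀ f ∈ p.edges, r e f := by
  obtain ⟨e1, he1, hre1, hue1⟩ := hu
  obtain ⟨e2, he2, hre2, hve2⟩ := hv
  have he1eq : s(u, Sym2.Mem.other hue1) = e1 := Sym2.other_spec hue1
  have he2eq : s(v, Sym2.Mem.other hve2) = e2 := Sym2.other_spec hve2
  set u1 := Sym2.Mem.other hue1 with hu1def
  set v1 := Sym2.Mem.other hve2 with hv1def
  have adj1 : T.Adj u u1 := T.mem_edgeSet.mp (he1eq ▸ he1)
  have adj2 : T.Adj v v1 := T.mem_edgeSet.mp (he2eq ▸ he2)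
  have stepA : ∃ (a : V) (Q : T.Walk a v), Q.IsPath ∧ Q.edges.head? = some e1 ∧
      ∀ f ∈ p.edges, f ∈ Q.edges := by
    by_cases hmem : u1 ∈ p.support
    · exact ⟨u, p, hp, by rw [head_eq_of_adj_mem hT p hp adj1 hmem, he1eq], fun f hf => hf⟩
    · refine ⟨u1, Walk.cons adj1.symm p, (Walk.cons_isPath_iff _ _).mpr ⟨hp, hmem⟩, ?_, ?_⟩
      · rw [Walk.edges_cons, List.head?_cons, Sym2.eq_swap, he1eq]
      · intro f hf; rw [Walk.edges_cons]; exact List.mem_cons_of_mem _ hf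
  obtain ⟨a, Q, hQ, hQhead, hQsub⟩ := stepA
  have stepB : ∃ (b : V) (R : T.Walk a b), R.IsPath ∧ R.edges.head? = some e1 ∧
      R.edges.getLast? = some e2 ∧ ∀ f ∈ p.edges, f ∈ R.edges := by
    by_cases hmem : v1 ∈ Q.support
    · exact ⟨v, Q, hQ, hQhead,
        by rw [last_eq_of_adj_mem hT Q hQ adj2 hmem, he2eq], hQsub⟩
    · refine ⟨v1, Q.concat adj2, isPath_concat hQ adj2 hmem, ?_, ?_, ?_⟩
      · rw [Walk.edges_concat, List.concat_eq_append, List.head?_append, hQhead]; rfl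
      · rw [Walk.edges_concat, List.concat_eq_append, List.getLast?_concat, he2eq]
      · intro f hf; rw [Walk.edges_concat, List.concat_eq_append]
        exact List.mem_append_left _ (hQsub f hf)
  obtain ⟨b, R, hR, hRh, hRl, hRsub⟩ := stepB
  have H := hconn a b R hR e1 e2 hRh hRl (htrans e1 e e2 (hsymm e e1 hre1) hre2)
  intro f hf
  exact htrans e e1 f hre1 (hsymm f e1 (H f (hRsub f hf)))

include hT hrefl hsymm htrans hconn in
lemma cyl_eq_iff {e f : Sym2 V} (he : e ∈ T.edgeSet) (hf : f ∈ T.edgeSet) :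
    Cyl T r e = Cyl T r f ↔ r e f := by
  constructor
  · intro h
    induction f using Sym2.ind with
    | _ a b =>
      have adj : T.Adj a b := T.mem_edgeSet.mp hf
      have ha : a ∈ Cyl T r e := h ▸ (⟨s(a,b), hf, hrefl _ hf, Sym2.mem_mk_left a b⟩ :
        a ∈ Cyl T r s(a,b))
      have hb : b ∈ Cyl T r e := h ▸ (⟨s(a,b), hf, hrefl _ hf, Sym2.mem_mk_right a b⟩ :
        b ∈ Cyl T r s(a,b))
      have hp : (Walk.cons adj Walk.nil).IsPath := by
        rw [Walk.cons_isPath_iff]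
        exact ⟨Walk.IsPath.nil, by simp [adj.ne]⟩
      exact cyl_convex hT hsymm htrans hconn ha hb (Walk.cons adj Walk.nil) hp s(a,b)
        (by simp)
  · intro hef
    ext w
    constructor
    · rintro ⟨e', he', hr, hw⟩
      exact ⟨e', he', htrans f e e' (hsymm e f hef) hr, hw⟩
    · rintro ⟨e', he', hr, hw⟩
      exact ⟨e', he', htrans e f e' hef hr, hw⟩

lemma tc_adj_inl {S : ↥(Cylinders T r)} {c} (h : (treeOfCylinders T r).Adj (Sum.inl S) c) :
    ∃ w : ↥(SharedVertices T r), c = Sum.inr w ∧ (w : V) ∈ (S : Set V) := by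
  rw [treeOfCylinders, fromRel_adj] at h
  rcases h.2 with ⟨S', w', h1, h2, h3⟩ | ⟨S', w', h1, h2, h3⟩
  · obtain rfl : S = S' := Sum.inl.inj h1
    exact ⟨w', h2, h3⟩
  · exact absurd h2 (by simp)

lemma tc_adj_inr {w : ↥(SharedVertices T r)} {c} (h : (treeOfCylinders T r).Adj (Sum.inr w) c) :
    ∃ S : ↥(Cylinders T r), c = Sum.inl S ∧ (w : V) ∈ (S : Set V) := by
  rw [treeOfCylinders, fromRel_adj] at h
  rcases h.2 with ⟨S', w', h1, h2, h3⟩ | ⟨S', w', h1, h2, h3⟩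
  · exact absurd h1 (by simp)
  · obtain rfl : w = w' := Sum.inr.inj h2
    exact ⟨S', h1, h3⟩

lemma tc_adj_mk (S : ↥(Cylinders T r)) (w : ↥(SharedVertices T r))
    (hm : (w : V) ∈ (S : Set V)) :
    (treeOfCylinders T r).Adj (Sum.inl S) (Sum.inr w) := by
  rw [treeOfCylinders, fromRel_adj]
  exact ⟨by simp, Or.inl ⟨S, w, rfl, rfl, hm⟩⟩

include hrefl in
lemma tc_reach_of_shared {e f : Sym2 V} (he : e ∈ T.edgeSet) (hf : f ∈ T.edgeSet) {x : V}
    (hxe : x ∈ Cyl T r e) (hxf : x ∈ Cyl T r f) :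
    (treeOfCylinders T r).Reachable (Sum.inl ⟨_, cyl_mem he⟩) (Sum.inl ⟨_, cyl_mem hf⟩) := by
  by_cases hcyl : Cyl T r e = Cyl T r f
  · have : (⟨Cyl T r e, cyl_mem he⟩ : ↥(Cylinders T r)) = ⟨Cyl T r f, cyl_mem hf⟩ :=
      Subtype.ext hcyl
    rw [this]
  · have hxS : x ∈ SharedVertices T r :=
      ⟨Cyl T r e, cyl_mem he, Cyl T r f, cyl_mem hf, hcyl, hxe, hxf⟩
    exact ((tc_adj_mk _ ⟨x, hxS⟩ hxe).reachable).trans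
      ((tc_adj_mk _ ⟨x, hxS⟩ hxf).reachable.symm)

include hrefl in
lemma tc_reach_walk : ∀ {u v : V} (p : T.Walk u v) {e f : Sym2 V}
    (he : e ∈ T.edgeSet) (hf : f ∈ T.edgeSet)
    (hu : u ∈ Cyl T r e) (hv : v ∈ Cyl T r f),
    (treeOfCylinders T r).Reachable (Sum.inl ⟨_, cyl_mem he⟩) (Sum.inl ⟨_, cyl_mem hf⟩) := by
  intro u v p
  induction p with
  | nil => exact fun he hf hu hv => tc_reach_of_shared hrefl he hf hu hv
  | @cons a c v h p' ih =>
    intro e f he hf hu hv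
    have hg : s(a, c) ∈ T.edgeSet := T.mem_edgeSet.mpr h
    exact (tc_reach_of_shared hrefl he hg hu
        ⟨_, hg, hrefl _ hg, Sym2.mem_mk_left a c⟩).trans
      (ih hg hf ⟨_, hg, hrefl _ hg, Sym2.mem_mk_right a c⟩ hv)

include hT hrefl in
lemma tc_connected (hne : T.edgeSet.Nonempty) : (treeOfCylinders T r).Connected := by
  obtain ⟨e0, he0⟩ := hne
  have hu0 : e0.out.1 ∈ Cyl T r e0 := ⟨e0, he0, hrefl _ he0, Sym2.out_fst_mem e0⟩
  have key : ∀ S : ↥(Cylinders T r),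
      (treeOfCylinders T r).Reachable (Sum.inl S) (Sum.inl ⟨_, cyl_mem he0⟩) := by
    intro S
    obtain ⟨e, he, hSe⟩ := S.2
    have hS : S = ⟨Cyl T r e, cyl_mem he⟩ := Subtype.ext hSe
    rw [hS]
    have hu : e.out.1 ∈ Cyl T r e := ⟨e, he, hrefl _ he, Sym2.out_fst_mem e⟩
    exact (hT.isConnected.preconnected e.out.1 e0.out.1).elim
      fun p => tc_reach_walk hrefl p he he0 hu hu0
  have key2 : ∀ w : ↥(SharedVertices T r),
      (treeOfCylinders T r).Reachable (Sum.inr w) (Sum.inl ⟨_, cyl_mem he0⟩) := by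
    intro w
    obtain ⟨S₁, hS₁, S₂, hS₂, hne', hw₁, hw₂⟩ := w.2
    exact ((tc_adj_mk ⟨S₁, hS₁⟩ w hw₁).symm.reachable).trans (key ⟨S₁, hS₁⟩)
  rw [connected_iff]
  refine ⟨fun a b => ?_, ⟨Sum.inl ⟨_, cyl_mem he0⟩⟩⟩
  rcases a with S | w <;> rcases b with S' | w'
  · exact (key S).trans (key S').symm
  · exact (key S).trans (key2 w').symm
  · exact (key2 w).trans (key S').symm
  · exact (key2 w).trans (key2 w').symm

include hT hrefl hsymm htrans hconn in
lemma tc_lemB : ∀ (n : ℕ) (S : ↥(Cylinders T r)) (w' : ↥(SharedVertices T r))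
    (q : (treeOfCylinders T r).Walk (Sum.inl S) (Sum.inr w')), q.length = n → q.IsPath →
    ∀ (u : V) (e : Sym2 V), e ∈ T.edgeSet → (S : Set V) = Cyl T r e → u ∈ Cyl T r e →
    ∃ P : T.Walk u (w' : V), P.edges.Chain' (· ≠ ·) ∧
      (∀ f, P.edges.head? = some f → ∃ e', e' ∈ T.edgeSet ∧ r e' f ∧
        ∃ hS' : Cyl T r e' ∈ Cylinders T r,
          Sum.inl (⟨Cyl T r e', hS'⟩ : ↥(Cylinders T r)) ∈ q.support) ∧
      (∀ x : ↥(SharedVertices T r), Sum.inr x ∈ q.support → (x : V) ∈ P.support) := by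
  intro n
  induction n using Nat.strong_induction_on with
  | _ n ih =>
  intro S w' q hlen hq u e he hSe hue
  cases q with
  | cons h1 q' =>
    obtain ⟨w1, rfl, hw1S⟩ := tc_adj_inl h1
    cases q' with
    | nil =>
      -- base case: single edge inl S -- inr w', here w1 = w'
      have hw1 : (w' : V) ∈ Cyl T r e := hSe ▸ hw1S
      obtain ⟨p0⟩ := hT.isConnected.preconnected u (w' : V)
      obtain ⟨P, hP⟩ : ∃ P : T.Walk u (w' : V), P.IsPath := ⟨p0.toPath.1, p0.toPath.2⟩
      have hedges : ∀ f ∈ P.edges, r e f := cyl_convex hT hsymm htrans hconn hue hw1 P hP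
      refine ⟨P, ?_, ?_, ?_⟩
      · exact (hP.isTrail.edges_nodup).isChain
      · intro f hf
        refine ⟨e, he, hedges f (List.mem_of_mem_head? hf), cyl_mem he, ?_⟩
        have : (⟨Cyl T r e, cyl_mem he⟩ : ↥(Cylinders T r)) = S := Subtype.ext hSe.symm
        rw [this]
        exact Walk.start_mem_support _
      · intro x hx
        simp only [Walk.support_cons, Walk.support_nil, List.mem_cons,
          List.mem_singleton] at hx
        rcases hx with hx | hx
        · exact absurd hx (by simp)
        · rcases hx with hx | hx
          · obtain rfl : x = w' := Sum.inr.inj hx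
            exact Walk.end_mem_support P
          · simp at hx
    | cons h2 q'' =>
      obtain ⟨S2, rfl, hw1S2⟩ := tc_adj_inr h2
      obtain ⟨e2, he2, hS2e2⟩ := S2.2
      have hw1e2 : (w1 : V) ∈ Cyl T r e2 := hS2e2 ▸ hw1S2
      have hlt : q''.length < n := by
        simp only [Walk.length_cons] at hlen; omega
      have hq'' : q''.IsPath := (hq.of_cons).of_cons
      obtain ⟨P'', hc'', hhd'', hx''⟩ :=
        ih q''.length hlt S2 w' q'' rfl hq'' (w1 : V) e2 he2 hS2e2 hw1e2
      -- the segment from u to w1 inside Cyl e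
      have hw1e : (w1 : V) ∈ Cyl T r e := hSe ▸ hw1S
      obtain ⟨p1⟩ := hT.isConnected.preconnected u (w1 : V)
      obtain ⟨P1, hP1⟩ : ∃ P : T.Walk u (w1 : V), P.IsPath := ⟨p1.toPath.1, p1.toPath.2⟩
      have hedges1 : ∀ f ∈ P1.edges, r e f := cyl_convex hT hsymm htrans hconn hue hw1e P1 hP1
      -- S not in q''.support
      have hSnot : Sum.inl S ∉ q''.support := by
        have := hq.2
        simp only [Walk.support_cons, List.nodup_cons] at this
        exact fun hmem => this.1 (List.mem_cons_of_mem _ hmem)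
      have hjunc : ∀ x ∈ P1.edges.getLast?, ∀ y ∈ P''.edges.head?, x ≠ y := by
        intro x hx y hy heq
        subst heq
        rw [Option.mem_def] at hy
        obtain ⟨e', he', hre', hS', hsup'⟩ := hhd'' x hy
        have hrex : r e x := hedges1 x (List.mem_of_mem_getLast? hx)
        have hree' : r e e' := htrans e x e' hrex (hsymm e' x hre')
        have hcyls : Cyl T r e = Cyl T r e' :=
          (cyl_eq_iff hT hrefl hsymm htrans hconn he he').mpr hree'
        apply hSnot
        have hseq : (⟨Cyl T r e', hS'⟩ : ↥(Cylinders T r)) = S :=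
          Subtype.ext (hSe.trans hcyls).symm
        rwa [hseq] at hsup'
      refine ⟨P1.append P'', ?_, ?_, ?_⟩
      · rw [Walk.edges_append, List.Chain', List.isChain_append]
        exact ⟨(hP1.isTrail.edges_nodup).isChain, hc'', hjunc⟩
      · intro f hf
        rw [Walk.edges_append] at hf
        rcases hE1 : P1.edges with _ | ⟨g, gs⟩
        · rw [hE1, List.nil_append] at hf
          obtain ⟨e', he', hre', hS', hsup'⟩ := hhd'' f hf
          exact ⟨e', he', hre', hS', by
            simp only [Walk.support_cons, List.mem_cons]
            exact Or.inr (Or.inr hsup')⟩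
        · rw [hE1] at hf
          simp only [List.cons_append, List.head?_cons, Option.some.injEq] at hf
          subst hf
          refine ⟨e, he, hedges1 g (by rw [hE1]; exact List.mem_cons_self), cyl_mem he, ?_⟩
          have : (⟨Cyl T r e, cyl_mem he⟩ : ↥(Cylinders T r)) = S := Subtype.ext hSe.symm
          rw [this]
          exact Walk.start_mem_support _
      · intro x hx
        simp only [Walk.support_cons, List.mem_cons] at hx
        rcases hx with hx | hx
        · exact absurd hx (by simp)
        rcases hx with hx | hx
        · obtain rfl : x = w1 := Sum.inr.inj hx
          rw [Walk.mem_support_append_iff]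
          exact Or.inl (Walk.end_mem_support P1)
        · rw [Walk.mem_support_append_iff]
          exact Or.inr (hx'' x hx)

end Aux

/-- If `T` is a tree and `r` is an equivalence relation on the edges of `T` each of whose
classes spans a subtree (any edge on a path between two equivalent edges is equivalent to
them), then the tree of cylinders is a tree. -/
theorem stmt11 (T : SimpleGraph V) (hT : T.IsTree)
    (r : Sym2 V → Sym2 V → Prop)
    (hne : T.edgeSet.Nonempty)
    (hdom : ∀ e e' : Sym2 V, r e e' → e ∈ T.edgeSet ∧ e' ∈ T.edgeSet)
    (hrefl : ∀ e ∈ T.edgeSet, r e e)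
    (hsymm : ∀ e e' : Sym2 V, r e e' → r e' e)
    (htrans : ∀ e e' e'' : Sym2 V, r e e' → r e' e'' → r e e'')
    (hconn : ∀ (u v : V) (p : T.Walk u v), p.IsPath →
      ∀ e₁ e₂ : Sym2 V, p.edges.head? = some e₁ → p.edges.getLast? = some e₂ →
        r e₁ e₂ → ∀ e ∈ p.edges, r e e₁) :
    (treeOfCylinders T r).IsTree := by
  classical
  constructor
  · exact tc_connected hT hrefl hne
  · intro x c hc
    -- find a shared vertex on the cycle
    have hinr : ∃ w : ↥(SharedVertices T r), Sum.inr w ∈ c.support := by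
      cases c with
      | nil => exact absurd rfl hc.ne_nil
      | cons h0 c0 =>
        rcases x with S0 | w0
        · obtain ⟨w, hw, -⟩ := tc_adj_inl h0
          subst hw
          exact ⟨w, by rw [Walk.support_cons]
                       exact List.mem_cons_of_mem _ (Walk.start_mem_support c0)⟩
        · exact ⟨w0, Walk.start_mem_support _⟩
    obtain ⟨w, hw⟩ := hinr
    have hc2 : (c.rotate _ hw).IsCycle := hc.rotate hw
    set c2 := c.rotate _ hw with hc2def
    clear_value c2
    clear hc2def hc hw
    cases c2 with
    | nil => exact absurd rfl hc2.ne_nil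
    | cons h q =>
      obtain ⟨S1, rfl, hwS1⟩ := tc_adj_inr h
      obtain ⟨hqpath, hqe⟩ := (Walk.cons_isCycle_iff _ _).mp hc2
      obtain ⟨e1, he1, hS1e1⟩ := S1.2
      have hwe1 : (w : V) ∈ Cyl T r e1 := hS1e1 ▸ hwS1
      obtain ⟨P, hchain, hhd, hx⟩ :=
        tc_lemB hT hrefl hsymm htrans hconn q.length S1 w q rfl hqpath (w : V) e1 he1 hS1e1 hwe1
      have hPpath : P.IsPath := chain'_isPath hT.IsAcyclic P hchain
      have hPnil : P = Walk.nil := (Walk.isPath_iff_eq_nil (p := P)).mp hPpath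
      -- find w1 ≠ w with inr w1 in q.support
      cases q with
      | cons h2 q2 =>
        obtain ⟨w1, rfl, hw1S1⟩ := tc_adj_inl h2
        have hw1P : (w1 : V) ∈ P.support := by
          apply hx
          rw [Walk.support_cons]
          exact List.mem_cons_of_mem _ (Walk.start_mem_support q2)
        rw [hPnil] at hw1P
        simp only [Walk.support_nil, List.mem_singleton] at hw1P
        obtain rfl : w1 = w := Subtype.ext hw1P
        -- but q is a path whose support contains inr w1 twice
        cases q2 with
        | nil =>
          -- then the cycle has length 2, contradiction
          have := hc2.three_le_length
          simp only [Walk.length_cons, Walk.length_nil] at this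
          omega
        | cons h3 q3 =>
          have hnodup := hqpath.2
          simp only [Walk.support_cons, List.nodup_cons] at hnodup
          exact hnodup.2.1 (Walk.end_mem_support q3)
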